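/- arXiv:2112.01498 — 3 statements merged into one kernel-verified Lean document; each statement's English description precedes it below -/
import Mathlib

section
/- Reduced state of the permutation-averaged encoded state (SU(d), single-erasure case, Appendix D): let d ≥ 1 and m : ℕ. Let ψ : Fin d → ℂ with ∑ x, ‖ψ x‖² = 1, and let ρ : Matrix (Fin m → Fin d) (Fin m → Fin d) ℂ be positive semidefinite with trace 1 and ρ * tp m ↑W = tp m ↑W * ρ for every W ∈ Matrix.unitaryGroup (Fin d) ℂ. Define T : Matrix (Fin (m+1) → Fin d) (Fin (m+1) → Fin d) ℂ by T f g = ψ (f 0) * star (ψ (g 0)) * ρ (fun i => f i.succ) (fun i => g i.succ), and S := (((m+1))! : ℂ)⁻¹ • ∑ π : Equiv.Perm (Fin (m+1)), O π * T * (O π)ᴴ. Then for all x y : Fin d, ∑ h : Fin m → Fin d, S (Fin.cons x h) (Fin.cons y h) = (1/(m+1) : ℂ) * ψ x * star (ψ y) + ((m : ℂ)/(m+1)) * (1/d) * (if x = y then 1 else 0). -/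
open Matrix
open scoped ComplexOrder

/-- The `m`-fold tensor power of a `d × d` matrix, acting on `m` qudits. -/
def tp {d : ℕ} (m : ℕ) (W : Matrix (Fin d) (Fin d) ℂ) :
    Matrix (Fin m → Fin d) (Fin m → Fin d) ℂ :=
  Matrix.of fun f g => ∏ i, W (f i) (g i)

/-- The permutation operator on `n` qudits associated to `π : S_n`. -/
def permOp {d n : ℕ} (π : Equiv.Perm (Fin n)) :
    Matrix (Fin n → Fin d) (Fin n → Fin d) ℂ :=
  Matrix.of fun f g => if g = f ∘ π then 1 else 0

namespace PermAvgAux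

variable {d m : ℕ}

/-- Tensor power of a diagonal matrix is diagonal. -/
lemma tp_diagonal (ε : Fin d → ℂ) :
    tp m (Matrix.diagonal ε) = Matrix.diagonal (fun f : Fin m → Fin d => ∏ i, ε (f i)) := by
  ext f g
  by_cases h : f = g
  · subst h; simp [tp, Matrix.diagonal]
  · obtain ⟨i, hi⟩ := Function.ne_iff.mp h
    rw [Matrix.diagonal_apply_ne _ h]
    exact Finset.prod_eq_zero (Finset.mem_univ i)
      (by simp [Matrix.diagonal_apply_ne _ hi])

lemma diagonal_unitary (ε : Fin d → ℂ) (hε : ∀ a, ε a = 1 ∨ ε a = -1) :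
    Matrix.diagonal ε ∈ Matrix.unitaryGroup (Fin d) ℂ := by
  rw [Matrix.mem_unitaryGroup_iff, Matrix.star_eq_conjTranspose,
    Matrix.diagonal_conjTranspose, Matrix.diagonal_mul_diagonal]
  ext a b
  rcases eq_or_ne a b with rfl | h
  · rcases hε a with h | h <;>
      simp [Matrix.diagonal_apply_eq, Pi.mul_apply, Pi.star_apply, h]
  · simp [Matrix.diagonal_apply_ne _ h, Matrix.one_apply_ne h]

/-- Commutation with a diagonal tensor unitary forces off-"diagonal-pattern" entries to vanish. -/
lemma comm_diag_entries (ρ : Matrix (Fin m → Fin d) (Fin m → Fin d) ℂ)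
    (hρcomm : ∀ W ∈ Matrix.unitaryGroup (Fin d) ℂ, ρ * tp m W = tp m W * ρ)
    (ε : Fin d → ℂ) (hε : ∀ a, ε a = 1 ∨ ε a = -1) (f g : Fin m → Fin d)
    (hfg : (∏ i, ε (f i)) ≠ ∏ i, ε (g i)) : ρ f g = 0 := by
  have h := hρcomm _ (diagonal_unitary ε hε)
  rw [tp_diagonal] at h
  have h2 := congrFun (congrFun h f) g
  rw [Matrix.mul_diagonal, Matrix.diagonal_mul] at h2
  by_contra hne
  exact hfg (mul_left_cancel₀ hne (by rw [h2]; ring)).symm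

/-- The permutation matrix of `τ : Perm (Fin d)`. -/
def pmat (τ : Equiv.Perm (Fin d)) : Matrix (Fin d) (Fin d) ℂ :=
  Matrix.of fun a b => if b = τ a then 1 else 0

lemma pmat_unitary (τ : Equiv.Perm (Fin d)) : pmat τ ∈ Matrix.unitaryGroup (Fin d) ℂ := by
  rw [Matrix.mem_unitaryGroup_iff]
  ext a b
  simp only [Matrix.mul_apply, Matrix.star_apply, pmat, Matrix.of_apply]
  rw [Finset.sum_eq_single (τ a)]
  · rw [if_pos rfl, one_mul]
    rcases eq_or_ne a b with rfl | h
    · simp [Matrix.one_apply]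
    · rw [if_neg (fun hc => h (τ.injective hc)), star_zero, Matrix.one_apply_ne h]
  · intro c _ hc; rw [if_neg hc, zero_mul]
  · simp

lemma tp_pmat (τ : Equiv.Perm (Fin d)) :
    tp m (pmat τ) = Matrix.of fun f g : Fin m → Fin d =>
      if g = fun i => τ (f i) then 1 else 0 := by
  ext f g
  by_cases h : g = fun i => τ (f i)
  · subst h; simp [tp, pmat]
  · obtain ⟨i, hi⟩ := Function.ne_iff.mp h
    simp only [tp, Matrix.of_apply, if_neg h]
    exact Finset.prod_eq_zero (Finset.mem_univ i) (by simp [pmat, hi])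

/-- Covariance of `ρ` under collective permutations of the local basis. -/
lemma rho_swap_invariant (ρ : Matrix (Fin m → Fin d) (Fin m → Fin d) ℂ)
    (hρcomm : ∀ W ∈ Matrix.unitaryGroup (Fin d) ℂ, ρ * tp m W = tp m W * ρ)
    (τ : Equiv.Perm (Fin d)) (f g : Fin m → Fin d) :
    ρ (fun i => τ (f i)) (fun i => τ (g i)) = ρ f g := by
  have h := hρcomm _ (pmat_unitary τ)
  rw [tp_pmat] at h
  have h2 := congrFun (congrFun h f) (fun i => τ (g i))
  have hl : (ρ * Matrix.of fun f g : Fin m → Fin d =>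
      if g = fun i => τ (f i) then (1:ℂ) else 0) f (fun i => τ (g i)) = ρ f g := by
    simp only [Matrix.mul_apply, Matrix.of_apply, mul_ite, mul_one, mul_zero]
    rw [Finset.sum_eq_single g]
    · simp
    · intro c _ hc
      rw [if_neg]
      exact fun hcon => hc (funext fun i => τ.injective (congrFun hcon i)).symm
    · simp
  have hr : ((Matrix.of fun f g : Fin m → Fin d =>
      if g = fun i => τ (f i) then (1:ℂ) else 0) * ρ) f (fun i => τ (g i))
      = ρ (fun i => τ (f i)) (fun i => τ (g i)) := by
    simp only [Matrix.mul_apply, Matrix.of_apply, ite_mul, one_mul, zero_mul]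
    rw [Finset.sum_eq_single (fun i => τ (f i))]
    · simp
    · intro c _ hc; rw [if_neg hc]
    · simp
  rw [hl, hr] at h2
  exact h2.symm


variable {d m : ℕ}

/-- Extend a function off site `s` by a value at `s`. -/
def ext (s : Fin m) (k : {j : Fin m // j ≠ s} → Fin d) (v : Fin d) : Fin m → Fin d :=
  fun j => if h : j = s then v else k ⟨j, h⟩

@[simp] lemma ext_self (s : Fin m) (k : {j : Fin m // j ≠ s} → Fin d) (v : Fin d) :
    ext s k v s = v := by simp [ext]

lemma ext_ne (s : Fin m) (k : {j : Fin m // j ≠ s} → Fin d) (v : Fin d) {j : Fin m}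
    (h : j ≠ s) : ext s k v j = k ⟨j, h⟩ := by simp [ext, h]

/-- Splitting functions at a site. -/
def splitAt (s : Fin m) : (Fin m → Fin d) ≃ Fin d × ({j : Fin m // j ≠ s} → Fin d) where
  toFun k := (k s, fun j => k j.1)
  invFun ck := ext s ck.2 ck.1
  left_inv k := by
    funext j
    by_cases h : j = s
    · subst h; simp
    · simp [ext_ne _ _ _ h]
  right_inv := by
    rintro ⟨c, k⟩
    refine Prod.ext (by simp) ?_
    funext j
    exact ext_ne _ _ _ j.2

lemma sum_split (s : Fin m) (F : (Fin m → Fin d) → ℂ) :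
    ∑ k : Fin m → Fin d, F k
      = ∑ c : Fin d, ∑ k' : {j : Fin m // j ≠ s} → Fin d, F (ext s k' c) := by
  rw [← Equiv.sum_comp (splitAt s).symm F, Fintype.sum_prod_type]
  rfl

/-- Partial trace of `ρ` keeping only site `s`. -/
noncomputable def ptr (ρ : Matrix (Fin m → Fin d) (Fin m → Fin d) ℂ) (s : Fin m) (x y : Fin d) : ℂ :=
  ∑ k' : {j : Fin m // j ≠ s} → Fin d, ρ (ext s k' x) (ext s k' y)

lemma ptr_trace (ρ : Matrix (Fin m → Fin d) (Fin m → Fin d) ℂ) (s : Fin m) :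
    ∑ x : Fin d, ptr ρ s x x = ρ.trace := by
  rw [Matrix.trace]
  simp only [Matrix.diag]
  rw [sum_split s (fun k => ρ k k)]
  rfl


/-- The single-site partial trace of an invariant state is maximally mixed. -/
lemma ptr_eq (hd : 1 ≤ d) (ρ : Matrix (Fin m → Fin d) (Fin m → Fin d) ℂ)
    (hρtr : ρ.trace = 1)
    (hρcomm : ∀ W ∈ Matrix.unitaryGroup (Fin d) ℂ, ρ * tp m W = tp m W * ρ)
    (s : Fin m) (x y : Fin d) :
    ptr ρ s x y = if x = y then (d : ℂ)⁻¹ else 0 := by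
  have hdiag : ∀ x y : Fin d, ptr ρ s x x = ptr ρ s y y := by
    intro x y
    unfold ptr
    set τ := Equiv.swap x y with hτ
    have key : ∀ k' : {j : Fin m // j ≠ s} → Fin d,
        ρ (ext s k' x) (ext s k' x)
          = ρ (ext s (fun j => τ (k' j)) y) (ext s (fun j => τ (k' j)) y) := by
      intro k'
      have h1 : (fun i => τ (ext s k' x i)) = ext s (fun j => τ (k' j)) y := by
        funext i
        by_cases h : i = s
        · subst h; simp [hτ, Equiv.swap_apply_left]
        · rw [ext_ne _ _ _ h, ext_ne _ _ _ h]
      rw [← rho_swap_invariant ρ hρcomm τ (ext s k' x) (ext s k' x), h1]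
    calc ∑ k' : {j : Fin m // j ≠ s} → Fin d, ρ (ext s k' x) (ext s k' x)
        = ∑ k' : {j : Fin m // j ≠ s} → Fin d,
            ρ (ext s (fun j => τ (k' j)) y) (ext s (fun j => τ (k' j)) y) :=
          Finset.sum_congr rfl (fun k' _ => key k')
      _ = ∑ k' : {j : Fin m // j ≠ s} → Fin d, ρ (ext s k' y) (ext s k' y) :=
          Fintype.sum_bijective _ (Equiv.piCongrRight fun _ => τ).bijective _ _
            (fun k' => rfl)
  have htr : ∑ z : Fin d, ptr ρ s z z = 1 := by rw [ptr_trace, hρtr]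
  have hd0 : (d : ℂ) ≠ 0 := Nat.cast_ne_zero.mpr (by omega)
  rcases eq_or_ne x y with rfl | hxy
  · rw [if_pos rfl]
    have hsum : ∑ z : Fin d, ptr ρ s z z = (d : ℂ) * ptr ρ s x x := by
      rw [Finset.sum_congr rfl (fun z _ => hdiag z x), Finset.sum_const,
        Finset.card_univ, Fintype.card_fin, nsmul_eq_mul]
    rw [hsum] at htr
    field_simp
    linear_combination htr
  · rw [if_neg hxy]
    apply Finset.sum_eq_zero
    intro k' _
    set ε : Fin d → ℂ := fun a => if a = x then -1 else 1 with hεdef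
    have hε : ∀ a, ε a = 1 ∨ ε a = -1 := by
      intro a; by_cases h : a = x <;> simp [hεdef, h]
    apply comm_diag_entries ρ hρcomm ε hε
    have hx : ε x = -1 := by simp [hεdef]
    have hy : ε y = 1 := by simp [hεdef, Ne.symm hxy]
    have hrw : ∀ v : Fin d, ∏ i, ε (ext s k' v i)
        = ε v * ∏ i ∈ Finset.univ.erase s, ε (ext s k' v i) := by
      intro v
      rw [← Finset.mul_prod_erase Finset.univ _ (Finset.mem_univ s), ext_self]
    have hPeq : ∏ i ∈ Finset.univ.erase s, ε (ext s k' x i)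
        = ∏ i ∈ Finset.univ.erase s, ε (ext s k' y i) := by
      refine Finset.prod_congr rfl (fun i hi => ?_)
      rw [ext_ne _ _ _ (Finset.mem_erase.mp hi).1, ext_ne _ _ _ (Finset.mem_erase.mp hi).1]
    set P := ∏ i ∈ Finset.univ.erase s, ε (ext s k' y i) with hP
    have hP0 : P ≠ 0 := by
      rw [hP]
      apply Finset.prod_ne_zero_iff.mpr
      intro i _
      rcases hε (ext s k' y i) with h | h <;> rw [h] <;> norm_num
    rw [hrw x, hrw y, hx, hy, hPeq]
    intro hcon
    exact hP0 (by linear_combination -hcon / 2)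

/-- Conjugation by a permutation operator permutes the entries. -/
lemma permOp_conj {n : ℕ} (π : Equiv.Perm (Fin n))
    (T : Matrix (Fin n → Fin d) (Fin n → Fin d) ℂ) :
    permOp π * T * (permOp π)ᴴ = Matrix.of fun f g => T (f ∘ π) (g ∘ π) := by
  ext f g
  rw [Matrix.of_apply]
  have h1 : ∀ g', (permOp (d := d) π * T) f g' = T (f ∘ π) g' := by
    intro g'
    rw [Matrix.mul_apply, Finset.sum_eq_single (f ∘ π)]
    · simp [permOp]
    · intro c _ hc; simp [permOp, hc]
    · simp
  rw [Matrix.mul_apply, Finset.sum_eq_single (g ∘ π)]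
  · rw [h1, Matrix.conjTranspose_apply]; simp [permOp]
  · intro c _ hc
    rw [Matrix.conjTranspose_apply]
    simp only [permOp, Matrix.of_apply, if_neg hc, star_zero, mul_zero]
  · simp

/-- Case `π 0 = 0`: the inner sum gives the trace of `ρ`. -/
lemma case_zero (ψ : Fin d → ℂ) (ρ : Matrix (Fin m → Fin d) (Fin m → Fin d) ℂ)
    (x y : Fin d) (e : Equiv.Perm (Fin m)) :
    ∑ h : Fin m → Fin d,
      ψ x * star (ψ y) * ρ (fun i => h (e i)) (fun i => h (e i))
      = ψ x * star (ψ y) * ρ.trace := by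
  have hbij : Function.Bijective (fun (h : Fin m → Fin d) => h ∘ e) := by
    constructor
    · intro a b hab
      funext i
      simpa using congrFun hab (e.symm i)
    · intro k
      exact ⟨k ∘ e.symm, by funext i; simp⟩
  refine Eq.trans (Fintype.sum_bijective _ hbij _
    (fun k => ψ x * star (ψ y) * ρ k k) (fun h => rfl)) ?_
  rw [← Finset.mul_sum]
  rfl

/-- Case `π 0 = j.succ`: the inner sum gives the partial trace of `ρ`. -/
lemma case_succ (hd : 1 ≤ d) (ψ : Fin d → ℂ)
    (hψc : ∑ c : Fin d, ψ c * star (ψ c) = 1)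
    (ρ : Matrix (Fin m → Fin d) (Fin m → Fin d) ℂ) (hρtr : ρ.trace = 1)
    (hρcomm : ∀ W ∈ Matrix.unitaryGroup (Fin d) ℂ, ρ * tp m W = tp m W * ρ)
    (x y : Fin d) (j : Fin m) (e : Equiv.Perm (Fin m)) :
    ∑ h : Fin m → Fin d,
      ψ (h j) * star (ψ (h j)) *
        ρ (fun i => if e i = j then x else h (e i))
          (fun i => if e i = j then y else h (e i))
      = if x = y then ((d : ℂ))⁻¹ else 0 := by
  have hbij : Function.Bijective (fun (k : Fin m → Fin d) => k ∘ e.symm) := by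
    constructor
    · intro a b hab
      funext i
      simpa using congrFun hab (e i)
    · intro k
      exact ⟨k ∘ e, by funext i; simp⟩
  have hcond : ∀ i : Fin m, (e i = j) = (i = e.symm j) := by
    intro i
    refine propext ⟨fun h => by simp [← h], fun h => by simp [h]⟩
  have step1 : (∑ h : Fin m → Fin d,
      ψ (h j) * star (ψ (h j)) *
        ρ (fun i => if e i = j then x else h (e i))
          (fun i => if e i = j then y else h (e i)))
      = ∑ k : Fin m → Fin d,
        ψ (k (e.symm j)) * star (ψ (k (e.symm j))) *
          ρ (fun i => if i = e.symm j then x else k i)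
            (fun i => if i = e.symm j then y else k i) := by
    refine (Fintype.sum_bijective _ hbij _ _ (fun k => ?_)).symm
    simp only [Function.comp_apply, Equiv.symm_apply_apply, hcond]
  rw [step1]
  have hfun : ∀ (c v : Fin d) (k' : {i : Fin m // i ≠ e.symm j} → Fin d),
      (fun i => if i = e.symm j then v else ext (e.symm j) k' c i)
        = ext (e.symm j) k' v := by
    intro c v k'
    funext i
    by_cases h : i = e.symm j
    · subst h; simp
    · simp [h, ext_ne _ _ _ h]
  rw [sum_split (e.symm j)]
  have hterm : ∀ (c : Fin d) (k' : {i : Fin m // i ≠ e.symm j} → Fin d),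
      ψ (ext (e.symm j) k' c (e.symm j)) * star (ψ (ext (e.symm j) k' c (e.symm j))) *
        ρ (fun i => if i = e.symm j then x else ext (e.symm j) k' c i)
          (fun i => if i = e.symm j then y else ext (e.symm j) k' c i)
      = (ψ c * star (ψ c)) * ρ (ext (e.symm j) k' x) (ext (e.symm j) k' y) := by
    intro c k'
    rw [hfun c x k', hfun c y k', ext_self]
  calc ∑ c : Fin d, ∑ k' : {i : Fin m // i ≠ e.symm j} → Fin d,
        ψ (ext (e.symm j) k' c (e.symm j)) * star (ψ (ext (e.symm j) k' c (e.symm j))) *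
          ρ (fun i => if i = e.symm j then x else ext (e.symm j) k' c i)
            (fun i => if i = e.symm j then y else ext (e.symm j) k' c i)
      = ∑ c : Fin d, ∑ k' : {i : Fin m // i ≠ e.symm j} → Fin d,
          (ψ c * star (ψ c)) * ρ (ext (e.symm j) k' x) (ext (e.symm j) k' y) :=
        Finset.sum_congr rfl fun c _ => Finset.sum_congr rfl fun k' _ => hterm c k'
    _ = (∑ c : Fin d, ψ c * star (ψ c)) *
          ∑ k' : {i : Fin m // i ≠ e.symm j} → Fin d,
            ρ (ext (e.symm j) k' x) (ext (e.symm j) k' y) := by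
        simp only [← Finset.mul_sum]
        rw [← Finset.sum_mul]
    _ = if x = y then ((d : ℂ))⁻¹ else 0 := by
        rw [hψc, one_mul]
        exact ptr_eq hd ρ hρtr hρcomm (e.symm j) x y

end PermAvgAux

/-- **Reduced state of the permutation-averaged encoded state** (SU(d), single-erasure case,
Appendix D): if `ρ` is a state on `m` qudits commuting with every collective unitary `W^{⊗m}` and
`ψ` is a normalized single-qudit state, then the single-site marginal (at site `0`) of the
`S_{m+1}`-average of `|ψ⟩⟨ψ| ⊗ ρ` equals `(1/n)|ψ⟩⟨ψ| + ((n−1)/n)·I/d` with `n = m + 1`. -/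
theorem perm_avg_reduced_state (d m : ℕ) (hd : 1 ≤ d)
    (ψ : Fin d → ℂ) (hψ : ∑ x, ‖ψ x‖ ^ 2 = (1 : ℝ))
    (ρ : Matrix (Fin m → Fin d) (Fin m → Fin d) ℂ)
    (hρ : ρ.PosSemidef) (hρtr : ρ.trace = 1)
    (hρcomm : ∀ W ∈ Matrix.unitaryGroup (Fin d) ℂ, ρ * tp m W = tp m W * ρ)
    (T : Matrix (Fin (m + 1) → Fin d) (Fin (m + 1) → Fin d) ℂ)
    (hT : ∀ f g, T f g = ψ (f 0) * star (ψ (g 0)) *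
      ρ (fun i => f i.succ) (fun i => g i.succ))
    (S : Matrix (Fin (m + 1) → Fin d) (Fin (m + 1) → Fin d) ℂ)
    (hS : S = (((m + 1).factorial : ℂ))⁻¹ •
      ∑ π : Equiv.Perm (Fin (m + 1)), permOp π * T * (permOp π)ᴴ)
    (x y : Fin d) :
    ∑ h : Fin m → Fin d, S (Fin.cons x h) (Fin.cons y h) =
      (1 / ((m : ℂ) + 1)) * ψ x * star (ψ y) +
        ((m : ℂ) / ((m : ℂ) + 1)) * (1 / (d : ℂ)) * (if x = y then 1 else 0) := by
  classical
  have hd0 : (d : ℂ) ≠ 0 := Nat.cast_ne_zero.mpr (by omega)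
  have hψc : ∑ c : Fin d, ψ c * star (ψ c) = 1 := by
    have h1 : ∑ c : Fin d, ψ c * star (ψ c) = ((∑ c : Fin d, ‖ψ c‖ ^ 2 : ℝ) : ℂ) := by
      push_cast
      exact Finset.sum_congr rfl fun c _ => Complex.mul_conj' _
    rw [h1, hψ]
    norm_num
  have hSentry : ∀ f g, S f g = (((m + 1).factorial : ℂ))⁻¹ *
      ∑ π : Equiv.Perm (Fin (m + 1)), T (f ∘ π) (g ∘ π) := by
    intro f g
    rw [hS]
    simp only [Matrix.smul_apply, Matrix.sum_apply, smul_eq_mul]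
    congr 1
    exact Finset.sum_congr rfl fun π _ => by rw [PermAvgAux.permOp_conj π T, Matrix.of_apply]
  have harg : ∀ (v : Fin d) (h : Fin m → Fin d) (j : Fin m) (e : Equiv.Perm (Fin m)),
      (fun i => Fin.cons (α := fun _ => Fin d) v h
          ((Equiv.swap (0 : Fin (m + 1)) j.succ) ((e i).succ)))
        = fun i => if e i = j then v else h (e i) := by
    intro v h j e
    funext i
    by_cases hij : e i = j
    · rw [hij, Equiv.swap_apply_right, Fin.cons_zero, if_pos rfl]
    · rw [Equiv.swap_apply_of_ne_of_ne (Fin.succ_ne_zero _)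
        (fun hc => hij (Fin.succ_injective _ hc)), Fin.cons_succ, if_neg hij]
  have hinner : ∀ (p : Fin (m + 1)) (e : Equiv.Perm (Fin m)),
      ∑ h : Fin m → Fin d,
        T (Fin.cons x h ∘ Equiv.Perm.decomposeFin.symm (p, e))
          (Fin.cons y h ∘ Equiv.Perm.decomposeFin.symm (p, e))
      = if p = 0 then ψ x * star (ψ y) else (if x = y then ((d : ℂ))⁻¹ else 0) := by
    intro p e
    induction p using Fin.cases with
    | zero =>
      rw [if_pos rfl]
      have hterm : ∀ h : Fin m → Fin d,
          T (Fin.cons x h ∘ Equiv.Perm.decomposeFin.symm ((0 : Fin (m + 1)), e))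
            (Fin.cons y h ∘ Equiv.Perm.decomposeFin.symm ((0 : Fin (m + 1)), e))
          = ψ x * star (ψ y) * ρ (fun i => h (e i)) (fun i => h (e i)) := by
        intro h
        rw [hT]
        simp only [Function.comp_apply, Equiv.Perm.decomposeFin_symm_apply_zero,
          Equiv.Perm.decomposeFin_symm_apply_succ, Equiv.swap_self,
          Equiv.refl_apply, Fin.cons_zero, Fin.cons_succ]
      rw [Finset.sum_congr rfl fun h _ => hterm h, PermAvgAux.case_zero ψ ρ x y e,
        hρtr, mul_one]
    | succ j =>
      rw [if_neg (Fin.succ_ne_zero j)]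
      have hterm : ∀ h : Fin m → Fin d,
          T (Fin.cons x h ∘ Equiv.Perm.decomposeFin.symm (j.succ, e))
            (Fin.cons y h ∘ Equiv.Perm.decomposeFin.symm (j.succ, e))
          = ψ (h j) * star (ψ (h j)) *
              ρ (fun i => if e i = j then x else h (e i))
                (fun i => if e i = j then y else h (e i)) := by
        intro h
        rw [hT]
        simp only [Function.comp_apply, Equiv.Perm.decomposeFin_symm_apply_zero,
          Equiv.Perm.decomposeFin_symm_apply_succ, Fin.cons_succ]
        rw [harg x h j e, harg y h j e]
      rw [Finset.sum_congr rfl fun h _ => hterm h]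
      exact PermAvgAux.case_succ hd ψ hψc ρ hρtr hρcomm x y j e
  have hπsum : ∑ π : Equiv.Perm (Fin (m + 1)), ∑ h : Fin m → Fin d,
      T (Fin.cons x h ∘ π) (Fin.cons y h ∘ π)
      = (m.factorial : ℂ) * (ψ x * star (ψ y)) +
        (m : ℂ) * (m.factorial : ℂ) * (if x = y then ((d : ℂ))⁻¹ else 0) := by
    rw [← Equiv.sum_comp (Equiv.Perm.decomposeFin.symm)
      (fun π => ∑ h : Fin m → Fin d, T (Fin.cons x h ∘ π) (Fin.cons y h ∘ π)),
      Fintype.sum_prod_type]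
    rw [Finset.sum_congr rfl fun p _ => Finset.sum_congr rfl fun e _ => hinner p e]
    rw [Fin.sum_univ_succ]
    simp only [if_pos rfl, Fin.succ_ne_zero, if_neg (Fin.succ_ne_zero _),
      Finset.sum_const, Finset.card_univ, Fintype.card_perm, Fintype.card_fin,
      nsmul_eq_mul]
    push_cast
    ring
  calc ∑ h : Fin m → Fin d, S (Fin.cons x h) (Fin.cons y h)
      = (((m + 1).factorial : ℂ))⁻¹ * ∑ π : Equiv.Perm (Fin (m + 1)),
          ∑ h : Fin m → Fin d, T (Fin.cons x h ∘ π) (Fin.cons y h ∘ π) := by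
        rw [Finset.sum_congr rfl fun h _ => hSentry (Fin.cons x h) (Fin.cons y h),
          ← Finset.mul_sum, Finset.sum_comm]
    _ = (((m + 1).factorial : ℂ))⁻¹ *
          ((m.factorial : ℂ) * (ψ x * star (ψ y)) +
            (m : ℂ) * (m.factorial : ℂ) * (if x = y then ((d : ℂ))⁻¹ else 0)) := by
        rw [hπsum]
    _ = (1 / ((m : ℂ) + 1)) * ψ x * star (ψ y) +
          ((m : ℂ) / ((m : ℂ) + 1)) * (1 / (d : ℂ)) * (if x = y then 1 else 0) := by
        have hm1 : ((m : ℂ) + 1) ≠ 0 := by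
          have : ((m + 1 : ℕ) : ℂ) ≠ 0 := Nat.cast_ne_zero.mpr (Nat.succ_ne_zero m)
          push_cast at this
          exact this
        have hfac : ((m.factorial : ℕ) : ℂ) ≠ 0 :=
          Nat.cast_ne_zero.mpr m.factorial_ne_zero
        rw [Nat.factorial_succ]
        push_cast
        by_cases hxy : x = y
        · rw [if_pos hxy, if_pos hxy]
          field_simp
        · rw [if_neg hxy, if_neg hxy]
          field_simp
          ring
end

section
/- Reduced state of the normalized Hamming-weight projector (the average state ρ^{x,x}_avg, Appendices B.2/C.2): let n, t, w : ℕ with t ≤ n and w ≤ n, and define M : Matrix ((Fin t → Bool) × (Fin (n−t) → Bool)) ((Fin t → Bool) × (Fin (n−t) → Bool)) ℂ by M (f,g) (f',g') = if (f,g) = (f',g') ∧ wt f + wt g = w then ((n.choose w : ℂ))⁻¹ else 0 (the projector onto total Hamming weight w, normalized by C(n,w)). Then for all f f' : Fin t → Bool, ∑ g : Fin (n−t) → Bool, M (f,g) (f',g) = if f = f' ∧ wt f ≤ w then ((n−t).choose (w − wt f) : ℂ) / (n.choose w) else 0. -/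
open Matrix

/-- The Hamming weight of a basis state of `m` qubits. -/
def wt {m : ℕ} (f : Fin m → Bool) : ℕ := (Finset.univ.filter (fun i => f i = true)).card

lemma count_wt (m k : ℕ) :
    (Finset.univ.filter (fun g : Fin m → Bool => wt g = k)).card = m.choose k := by
  have h : m.choose k = ((Finset.univ : Finset (Fin m)).powersetCard k).card := by
    rw [Finset.card_powersetCard, Finset.card_univ, Fintype.card_fin]
  rw [h]
  apply Finset.card_bij (fun g _ => Finset.univ.filter (fun i => g i = true))
  · intro g hg
    simp only [Finset.mem_filter, Finset.mem_univ, true_and] at hg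
    simp [Finset.mem_powersetCard, hg, wt]
    exact hg
  · intro g₁ h₁ g₂ h₂ he
    funext i
    have := Finset.ext_iff.mp he i
    simp at this
    cases hb : g₁ i <;> cases hb2 : g₂ i <;> simp_all
  · intro s hs
    simp only [Finset.mem_powersetCard] at hs
    refine ⟨fun i => i ∈ s, ?_, ?_⟩
    · simp only [Finset.mem_filter, Finset.mem_univ, true_and, wt]
      rw [← hs.2]
      show _ ∈ Finset.univ.filter (fun g : Fin m → Bool => wt g = s.card)
      rw [Finset.mem_filter]; refine ⟨Finset.mem_univ _, ?_⟩; simp only [wt]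
      congr 1
      ext i; simp
    · ext i; simp

/-- **Reduced state of the normalized Hamming-weight projector** (the average state
`ρ^{x,x}_avg`, Appendices B.2/C.2): tracing the normalized projector onto total Hamming weight
`w` of `n` qubits over the last `n − t` qubits yields the diagonal `t`-qubit state
`∑_i [C(n−t, w−i)/C(n,w)] Π_i`. -/
theorem reduced_weight_projector (n t w : ℕ) (ht : t ≤ n) (hw : w ≤ n)
    (M : Matrix ((Fin t → Bool) × (Fin (n - t) → Bool))
      ((Fin t → Bool) × (Fin (n - t) → Bool)) ℂ)
    (hM : ∀ f g f' g', M (f, g) (f', g') =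
      if (f, g) = (f', g') ∧ wt f + wt g = w then ((n.choose w : ℕ) : ℂ)⁻¹ else 0)
    (f f' : Fin t → Bool) :
    ∑ g : Fin (n - t) → Bool, M (f, g) (f', g) =
      if f = f' ∧ wt f ≤ w then
        (((n - t).choose (w - wt f) : ℕ) : ℂ) / ((n.choose w : ℕ) : ℂ)
      else 0 := by
  simp only [hM, Prod.mk.injEq, and_true]
  by_cases hf : f = f'
  · subst hf
    simp only [true_and, if_pos, eq_self_iff_true]
    by_cases hwf : wt f ≤ w
    · rw [if_pos hwf]
      have hiff : ∀ g : Fin (n - t) → Bool, (wt f + wt g = w) ↔ (wt g = w - wt f) := by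
        intro g; omega
      calc ∑ g : Fin (n - t) → Bool,
            (if wt f + wt g = w then ((n.choose w : ℕ) : ℂ)⁻¹ else 0)
          = ∑ g : Fin (n - t) → Bool,
            (if wt g = w - wt f then ((n.choose w : ℕ) : ℂ)⁻¹ else 0) := by
            apply Finset.sum_congr rfl; intro g _; rw [if_congr (hiff g) rfl rfl]
        _ = (Finset.univ.filter (fun g : Fin (n - t) → Bool => wt g = w - wt f)).card
              • ((n.choose w : ℕ) : ℂ)⁻¹ := by
            rw [← Finset.sum_filter, Finset.sum_const]
        _ = (((n - t).choose (w - wt f) : ℕ) : ℂ) / ((n.choose w : ℕ) : ℂ) := by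
            rw [count_wt, nsmul_eq_mul, div_eq_mul_inv]
    · rw [if_neg (by tauto)]
      apply Finset.sum_eq_zero
      intro g _
      rw [if_neg]
      rintro ⟨-, h2⟩
      omega
  · rw [if_neg (by tauto)]
    apply Finset.sum_eq_zero
    intro g _
    rw [if_neg]
    rintro ⟨h1, -⟩
    exact hf h1
end

section
/- Matrices commuting with all collective unitaries have maximally mixed single-site marginals (step in Appendix D): let d ≥ 1 and m' : ℕ, and let ρ : Matrix (Fin (m'+1) → Fin d) (Fin (m'+1) → Fin d) ℂ have trace 1 and satisfy ρ * tp (m'+1) ↑W = tp (m'+1) ↑W * ρ for every W ∈ Matrix.unitaryGroup (Fin d) ℂ. Then for all x y : Fin d, ∑ h : Fin m' → Fin d, ρ (Fin.cons x h) (Fin.cons y h) = if x = y then (1/d : ℂ) else 0. -/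
open Matrix

namespace CIMaux

variable {d m : ℕ}

/-- Tensor product of a family of matrices. -/
noncomputable def tpf (A : Fin m → Matrix (Fin d) (Fin d) ℂ) :
    Matrix (Fin m → Fin d) (Fin m → Fin d) ℂ :=
  Matrix.of fun f g => ∏ i, A i (f i) (g i)

lemma tpf_mul (A B : Fin m → Matrix (Fin d) (Fin d) ℂ) :
    tpf A * tpf B = tpf (fun i => A i * B i) := by
  ext f g
  simp only [tpf, Matrix.mul_apply, Matrix.of_apply]
  rw [Fintype.prod_sum]
  exact Finset.sum_congr rfl fun h _ => (Finset.prod_mul_distrib).symm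

lemma prod_one_apply (f g : Fin m → Fin d) :
    (∏ i, (1 : Matrix (Fin d) (Fin d) ℂ) (f i) (g i)) = if f = g then 1 else 0 := by
  by_cases h : f = g
  · subst h; simp [Matrix.one_apply]
  · rw [if_neg h]
    obtain ⟨i, hi⟩ := Function.ne_iff.mp h
    exact Finset.prod_eq_zero (Finset.mem_univ i) (by simp [Matrix.one_apply, hi])

lemma tpf_one : tpf (fun _ : Fin m => (1 : Matrix (Fin d) (Fin d) ℂ)) = 1 := by
  ext f g
  show (∏ i, (1 : Matrix (Fin d) (Fin d) ℂ) (f i) (g i)) = (1 : Matrix _ _ ℂ) f g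
  rw [prod_one_apply, Matrix.one_apply]

lemma tpf_conjTranspose (A : Fin m → Matrix (Fin d) (Fin d) ℂ) :
    (tpf A)ᴴ = tpf (fun i => (A i)ᴴ) := by
  ext f g
  simp [tpf, Matrix.conjTranspose_apply, star_prod]

/-- The single-site marginal at site 0. -/
noncomputable def marg (ρ : Matrix (Fin (m + 1) → Fin d) (Fin (m + 1) → Fin d) ℂ) :
    Matrix (Fin d) (Fin d) ℂ :=
  Matrix.of fun p q => ∑ h : Fin m → Fin d, ρ (Fin.cons p h) (Fin.cons q h)

lemma trace_entry (B : Matrix (Fin d) (Fin d) ℂ) (p q : Fin d) :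
    Matrix.trace (B * Matrix.single q p 1) = B p q := by
  simp [Matrix.trace, Matrix.diag, Matrix.mul_apply, Matrix.single,
    Finset.sum_ite_eq, and_comm, ite_and]

lemma sum_cons {M : Type*} [AddCommMonoid M] (φ : (Fin (m + 1) → Fin d) → M) :
    ∑ F, φ F = ∑ p : Fin d, ∑ h : Fin m → Fin d, φ (Fin.cons p h) := by
  rw [← Equiv.sum_comp (Fin.consEquiv fun _ : Fin (m + 1) => Fin d) φ, Fintype.sum_prod_type]
  rfl

lemma marginal_trace (ρ : Matrix (Fin (m + 1) → Fin d) (Fin (m + 1) → Fin d) ℂ)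
    (A : Matrix (Fin d) (Fin d) ℂ) :
    Matrix.trace (ρ * tpf (Fin.cons A fun _ => 1)) = Matrix.trace (marg ρ * A) := by
  have hS : ∀ (F G : Fin (m + 1) → Fin d),
      tpf (Fin.cons A fun _ => 1) G F =
        A (G 0) (F 0) * (if Fin.tail G = Fin.tail F then 1 else 0) := by
    intro F G
    show (∏ i, (Fin.cons A (fun _ => 1) : Fin (m+1) → Matrix (Fin d) (Fin d) ℂ) i (G i) (F i)) = _
    rw [Fin.prod_univ_succ]
    simp only [Fin.cons_zero, Fin.cons_succ]
    rw [show (∏ i : Fin m, (1 : Matrix (Fin d) (Fin d) ℂ) (G i.succ) (F i.succ))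
        = ∏ i : Fin m, (1 : Matrix (Fin d) (Fin d) ℂ) (Fin.tail G i) (Fin.tail F i) from rfl,
      prod_one_apply]
  simp only [Matrix.trace, Matrix.diag, Matrix.mul_apply, marg, Matrix.of_apply]
  rw [sum_cons (fun F => ∑ G, ρ F G * tpf (Fin.cons A fun _ => 1) G F)]
  refine Finset.sum_congr rfl fun p _ => ?_
  have key : ∀ h : Fin m → Fin d,
      (∑ G, ρ (Fin.cons p h) G * tpf (Fin.cons A fun _ => 1) G (Fin.cons p h))
        = ∑ q, ρ (Fin.cons p h) (Fin.cons q h) * A q p := by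
    intro h
    rw [sum_cons (fun G => ρ (Fin.cons p h) G * tpf (Fin.cons A fun _ => 1) G (Fin.cons p h))]
    refine Finset.sum_congr rfl fun q _ => ?_
    have h2 : ∀ g, tpf (Fin.cons A fun _ => 1) (Fin.cons q g) (Fin.cons p h)
        = A q p * (if g = h then 1 else 0) := by
      intro g; rw [hS]; simp [Fin.tail_cons]
    simp only [h2, mul_ite, mul_one, mul_zero, Finset.sum_ite_eq', Finset.mem_univ, if_true]
  simp only [key]
  rw [Finset.sum_comm]
  refine Finset.sum_congr rfl fun q _ => ?_
  rw [Finset.sum_mul]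

lemma marg_comm (ρ : Matrix (Fin (m + 1) → Fin d) (Fin (m + 1) → Fin d) ℂ)
    (W : Matrix (Fin d) (Fin d) ℂ) (hW : W ∈ Matrix.unitaryGroup (Fin d) ℂ)
    (hcomm : ρ * tp (m + 1) W = tp (m + 1) W * ρ) :
    W * marg ρ = marg ρ * W := by
  have hWW : W * Wᴴ = 1 := by
    have := (Matrix.mem_unitaryGroup_iff).mp hW
    rwa [Matrix.star_eq_conjTranspose] at this
  have hWW' : Wᴴ * W = 1 := by
    have := (Matrix.mem_unitaryGroup_iff').mp hW
    rwa [Matrix.star_eq_conjTranspose] at this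
  set U := tpf (fun _ : Fin (m + 1) => W) with hUdef
  have htp : tp (m + 1) W = U := rfl
  rw [htp] at hcomm
  have hUU' : Uᴴ * U = 1 := by
    rw [hUdef, tpf_conjTranspose, tpf_mul]
    simp only [hWW']
    exact tpf_one
  have hρ' : Uᴴ * ρ * U = ρ := by
    rw [mul_assoc, hcomm, ← mul_assoc, hUU', one_mul]
  have hUconj : ∀ A : Matrix (Fin d) (Fin d) ℂ,
      U * tpf (Fin.cons A fun _ => 1) * Uᴴ = tpf (Fin.cons (W * A * Wᴴ) fun _ => 1) := by
    intro A
    rw [hUdef, tpf_conjTranspose, tpf_mul, tpf_mul]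
    refine congrArg tpf (funext fun i => ?_)
    refine Fin.cases ?_ (fun j => ?_) i
    · simp
    · simp [hWW]
  have htr : ∀ A : Matrix (Fin d) (Fin d) ℂ,
      Matrix.trace (marg ρ * A) = Matrix.trace ((Wᴴ * marg ρ * W) * A) := by
    intro A
    calc Matrix.trace (marg ρ * A) = Matrix.trace (ρ * tpf (Fin.cons A fun _ => 1)) :=
          (marginal_trace ρ A).symm
      _ = Matrix.trace ((Uᴴ * ρ * U) * tpf (Fin.cons A fun _ => 1)) := by rw [hρ']
      _ = Matrix.trace (ρ * (U * tpf (Fin.cons A fun _ => 1) * Uᴴ)) := by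
          rw [show (Uᴴ * ρ * U) * tpf (Fin.cons A fun _ => 1)
              = Uᴴ * (ρ * (U * tpf (Fin.cons A fun _ => 1))) by simp only [mul_assoc],
            Matrix.trace_mul_comm,
            show (ρ * (U * tpf (Fin.cons A fun _ => 1))) * Uᴴ
              = ρ * (U * tpf (Fin.cons A fun _ => 1) * Uᴴ) by simp only [mul_assoc]]
      _ = Matrix.trace (ρ * tpf (Fin.cons (W * A * Wᴴ) fun _ => 1)) := by rw [hUconj]
      _ = Matrix.trace (marg ρ * (W * A * Wᴴ)) := marginal_trace ρ _
      _ = Matrix.trace ((Wᴴ * marg ρ * W) * A) := by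
          rw [show marg ρ * (W * A * Wᴴ) = (marg ρ * W * A) * Wᴴ by simp only [mul_assoc],
            Matrix.trace_mul_comm,
            show Wᴴ * (marg ρ * W * A) = (Wᴴ * marg ρ * W) * A by simp only [mul_assoc]]
  have hent : marg ρ = Wᴴ * marg ρ * W := by
    ext p q
    have h3 := htr (Matrix.single q p 1)
    rwa [trace_entry, trace_entry] at h3
  calc W * marg ρ = W * (Wᴴ * marg ρ * W) := by rw [← hent]
    _ = (W * Wᴴ) * (marg ρ * W) := by simp only [mul_assoc]
    _ = marg ρ * W := by rw [hWW, one_mul]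

end CIMaux

/-- **Matrices commuting with all collective unitaries have maximally mixed single-site
marginals** (step in Appendix D): if a trace-one matrix `ρ` on `m' + 1` qudits commutes with
every collective unitary `W^{⊗(m'+1)}`, then its single-site marginal at site `0` is `(1/d)·I`
(by Schur's lemma). -/
theorem collective_invariant_marginal (d m' : ℕ) (hd : 1 ≤ d)
    (ρ : Matrix (Fin (m' + 1) → Fin d) (Fin (m' + 1) → Fin d) ℂ)
    (hρtr : ρ.trace = 1)
    (hρcomm : ∀ W ∈ Matrix.unitaryGroup (Fin d) ℂ, ρ * tp (m' + 1) W = tp (m' + 1) W * ρ)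
    (x y : Fin d) :
    ∑ h : Fin m' → Fin d, ρ (Fin.cons x h) (Fin.cons y h) =
      if x = y then (1 / (d : ℂ)) else 0 := by
  classical
  set M := CIMaux.marg ρ with hM
  have hMapp : ∀ a b : Fin d, M a b = ∑ h : Fin m' → Fin d, ρ (Fin.cons a h) (Fin.cons b h) :=
    fun a b => rfl
  have hcM : ∀ W ∈ Matrix.unitaryGroup (Fin d) ℂ, W * M = M * W :=
    fun W hW => CIMaux.marg_comm ρ W hW (hρcomm W hW)
  -- off-diagonal entries vanish (diagonal unitaries)
  have hoff : ∀ a b : Fin d, a ≠ b → M a b = 0 := by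
    intro a b hab
    set v : Fin d → ℂ := fun k => if k = a then -1 else 1 with hv
    have hWu : Matrix.diagonal v ∈ Matrix.unitaryGroup (Fin d) ℂ := by
      rw [Matrix.mem_unitaryGroup_iff, Matrix.star_eq_conjTranspose,
        Matrix.diagonal_conjTranspose, Matrix.diagonal_mul_diagonal,
        show (fun i => v i * star v i) = fun _ => (1 : ℂ) from funext fun k => by
          by_cases hk : k = a <;> simp [hv, hk],
        Matrix.diagonal_one]
    have h1 := congrFun (congrFun (hcM _ hWu) a) b
    rw [Matrix.diagonal_mul, Matrix.mul_diagonal] at h1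
    have hva : v a = -1 := by simp [hv]
    have hvb : v b = 1 := by simp [hv, hab.symm]
    rw [hva, hvb, mul_one, neg_one_mul] at h1
    exact add_self_eq_zero.mp (neg_eq_iff_add_eq_zero.mp h1)
  -- all diagonal entries are equal (swap unitaries)
  have hdiag : ∀ a b : Fin d, M a a = M b b := by
    intro a b
    set σ := Equiv.swap a b with hσ
    set P : Matrix (Fin d) (Fin d) ℂ := Matrix.of (fun i j => if σ i = j then 1 else 0) with hP
    have hcond : ∀ k j : Fin d, (σ k = j) = (k = σ j) := by
      intro k j
      rw [Equiv.apply_eq_iff_eq_symm_apply, hσ, Equiv.symm_swap]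
    have hPu : P ∈ Matrix.unitaryGroup (Fin d) ℂ := by
      rw [Matrix.mem_unitaryGroup_iff, Matrix.star_eq_conjTranspose]
      ext i j
      simp only [Matrix.mul_apply, Matrix.conjTranspose_apply, hP, Matrix.of_apply,
        Matrix.one_apply, apply_ite (star : ℂ → ℂ), star_one, star_zero, ite_mul, one_mul,
        zero_mul, Finset.sum_ite_eq, Finset.mem_univ, if_true]
      by_cases hij : i = j
      · simp [hij]
      · have hne : σ j ≠ σ i := fun hc => hij (Equiv.injective σ hc).symm
        simp [hij, hne]
    have h1 := congrFun (congrFun (hcM _ hPu) a) b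
    have hl : (P * M) a b = M (σ a) b := by
      simp [hP, Matrix.mul_apply, ite_mul, one_mul, zero_mul, Finset.sum_ite_eq]
    have hr : (M * P) a b = M a (σ b) := by
      simp only [hP, Matrix.mul_apply, Matrix.of_apply, hcond, mul_ite, mul_one, mul_zero,
        Finset.sum_ite_eq', Finset.mem_univ, if_true]
    rw [hl, hr, hσ, Equiv.swap_apply_left, Equiv.swap_apply_right] at h1
    exact h1.symm
  -- trace condition
  have htr1 : ∑ p : Fin d, M p p = 1 := by
    rw [← hρtr, Matrix.trace]
    simp only [Matrix.diag]
    rw [CIMaux.sum_cons (fun F => ρ F F)]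
    rfl
  have hdne : (d : ℂ) ≠ 0 := Nat.cast_ne_zero.mpr (by omega)
  have hdx : M x x = 1 / (d : ℂ) := by
    have hsum : ∑ p : Fin d, M p p = (d : ℂ) * M x x := by
      rw [Finset.sum_congr rfl fun p _ => hdiag p x, Finset.sum_const, Finset.card_univ,
        Fintype.card_fin, nsmul_eq_mul]
    rw [htr1] at hsum
    field_simp
    linear_combination -hsum
  rw [← hMapp x y]
  by_cases hxy : x = y
  · subst hxy; rw [if_pos rfl]; exact hdx
  · rw [if_neg hxy]; exact hoff x y hxy
end
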